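/- Let (g,B) be a quadratic Lie algebra over a field K of characteristic 0, D an invertible derivation of g skew-symmetric with respect to B, δ a derivation of g skew-symmetric with respect to B, λ ∈ K∖{0} and c ∈ g such that [δ,D] − λδ = ad_g(c). Let (g̃,T) be the double extension of (g,B) by the one-dimensional Lie algebra by means of δ. Then the linear endomorphism D̃ of g̃ defined by D̃(x) = Dx + B(c,x)e* for x in g, D̃(e*) = λe*, and D̃(e) = −λe − c, is an invertible derivation of g̃ that is skew-symmetric with respect to T. -/

import Mathlib

/-- Let `(g, B)` be quadratic with invertible skew-symmetric derivation `D`, let `δ` be a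
skew-symmetric derivation, `λ ≠ 0` and `c ∈ g` with `[δ,D] - λδ = ad c`.  On the double
extension `g̃ = K e ⊕ g ⊕ K e*` (modelled as `K × g × K`, with `e = (1,0,0)`,
`e* = (0,0,1)`, bracket `br` and scalar product `T`), the endomorphism `D̃` with
`D̃ x = D x + B(c,x) e*` on `g`, `D̃ e* = λ e*`, `D̃ e = -λ e - c` is an invertible derivation
which is skew-symmetric with respect to `T`. -/
theorem stmt_11 (K : Type*) [Field K] [CharZero K]
    (g : Type*) [LieRing g] [LieAlgebra K g] [Module.Finite K g]
    (B : LinearMap.BilinForm K g)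
    (hBnd : B.Nondegenerate)
    (hBsymm : ∀ x y : g, B x y = B y x)
    (hBinv : ∀ x y z : g, B ⁅x, y⁆ z = B x ⁅y, z⁆)
    (D : g →ₗ[K] g) (hDbij : Function.Bijective D)
    (hDder : ∀ x y : g, D ⁅x, y⁆ = ⁅D x, y⁆ + ⁅x, D y⁆)
    (hDskew : ∀ x y : g, B (D x) y = - B x (D y))
    (δ : g →ₗ[K] g)
    (hδder : ∀ x y : g, δ ⁅x, y⁆ = ⁅δ x, y⁆ + ⁅x, δ y⁆)
    (hδskew : ∀ x y : g, B (δ x) y = - B x (δ y))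
    (lam : K) (hlam : lam ≠ 0) (c : g)
    (hcomm : ∀ x : g, δ (D x) - D (δ x) - lam • δ x = ⁅c, x⁆)
    (br : K × g × K → K × g × K → K × g × K)
    (hbr : ∀ p q : K × g × K, br p q =
      (0, ⁅p.2.1, q.2.1⁆ + p.1 • δ q.2.1 - q.1 • δ p.2.1, B (δ p.2.1) q.2.1))
    (T : K × g × K → K × g × K → K)
    (hT : ∀ p q : K × g × K, T p q = B p.2.1 q.2.1 + p.1 * q.2.2 + q.1 * p.2.2) :
    ∃ Dt : (K × g × K) →ₗ[K] (K × g × K),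
      (∀ p : K × g × K,
        Dt p = (-(lam * p.1), D p.2.1 - p.1 • c, B c p.2.1 + lam * p.2.2)) ∧
      Function.Bijective Dt ∧
      (∀ p q : K × g × K, Dt (br p q) = br (Dt p) q + br p (Dt q)) ∧
      (∀ p q : K × g × K, T (Dt p) q = - T p (Dt q)) := by
  refine ⟨{ toFun := fun p => (-(lam * p.1), D p.2.1 - p.1 • c, B c p.2.1 + lam * p.2.2),
            map_add' := ?_, map_smul' := ?_ }, fun p => rfl, ?_, ?_, ?_⟩
  · intro p q
    simp only [Prod.fst_add, Prod.snd_add, map_add, Prod.mk_add_mk, Prod.mk.injEq]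
    refine ⟨by ring, ?_, by ring⟩
    · rw [add_smul]; abel
  · intro m p
    simp only [Prod.smul_fst, Prod.smul_snd, smul_eq_mul, map_smul, RingHom.id_apply,
      Prod.smul_mk, Prod.mk.injEq]
    refine ⟨by ring, ?_, by ring⟩
    · module
  · -- bijective
    constructor
    · intro p q h
      simp only [LinearMap.coe_mk, AddHom.coe_mk, Prod.mk.injEq] at h
      obtain ⟨h1, h2, h3⟩ := h
      have e1 : p.1 = q.1 := mul_left_cancel₀ hlam (neg_injective h1)
      have e2 : p.2.1 = q.2.1 := by
        rw [e1] at h2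
        exact hDbij.1 (sub_left_inj.mp h2)
      have e3 : p.2.2 = q.2.2 := by
        rw [e2] at h3
        exact mul_left_cancel₀ hlam (add_left_cancel h3)
      exact Prod.ext e1 (Prod.ext e2 e3)
    · intro q
      obtain ⟨y, hy⟩ := hDbij.2 (q.2.1 + (-(q.1 / lam)) • c)
      refine ⟨(-(q.1/lam), y, (q.2.2 - B c y)/lam), ?_⟩
      simp only [LinearMap.coe_mk, AddHom.coe_mk]
      refine Prod.ext ?_ (Prod.ext ?_ ?_)
      · simp only []; field_simp
      · simp only []; rw [hy]; abel
      · simp only []; field_simp; ring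
  · intro p q
    have key2 : D (⁅p.2.1, q.2.1⁆ + p.1 • δ q.2.1 - q.1 • δ p.2.1) - (0:K) • c =
        (⁅(D p.2.1 - p.1 • c), q.2.1⁆ + (-(lam * p.1)) • δ q.2.1 - q.1 • δ (D p.2.1 - p.1 • c))
        + (⁅p.2.1, (D q.2.1 - q.1 • c)⁆ + p.1 • δ (D q.2.1 - q.1 • c) - (-(lam * q.1)) • δ p.2.1) := by
      have hcp := hcomm p.2.1
      have hcq := hcomm q.2.1
      have hsk : ⁅p.2.1, c⁆ = -⁅c, p.2.1⁆ := by rw [← lie_skew]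
      simp only [map_add, map_sub, map_smul, hDder, lie_sub, sub_lie, smul_lie, lie_smul,
        zero_smul, sub_zero, neg_smul, hsk, ← hcp, ← hcq, smul_sub, smul_neg]
      module
    have key3 : B c (⁅p.2.1, q.2.1⁆ + p.1 • δ q.2.1 - q.1 • δ p.2.1)
          + lam * B (δ p.2.1) q.2.1 =
        B (δ (D p.2.1 - p.1 • c)) q.2.1 + B (δ p.2.1) (D q.2.1 - q.1 • c) := by
      have hcp := hcomm p.2.1
      have h1 : B (δ (D p.2.1)) q.2.1 + B (δ p.2.1) (D q.2.1) =
          B ⁅c, p.2.1⁆ q.2.1 + lam * B (δ p.2.1) q.2.1 := by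
        have hb : B (δ p.2.1) (D q.2.1) = - B (D (δ p.2.1)) q.2.1 := by
          rw [hDskew, neg_neg]
        rw [hb]
        have : B (δ (D p.2.1)) q.2.1 - B (D (δ p.2.1)) q.2.1 - lam * B (δ p.2.1) q.2.1
            = B ⁅c, p.2.1⁆ q.2.1 := by
          rw [← hcp]; simp [map_sub, map_smul, smul_eq_mul]
        linear_combination this
      have h2 : B ⁅c, p.2.1⁆ q.2.1 = B c ⁅p.2.1, q.2.1⁆ := hBinv c p.2.1 q.2.1
      have h3 : B (δ c) q.2.1 = - B c (δ q.2.1) := hδskew c q.2.1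
      have h4 : B (δ p.2.1) c = - B p.2.1 (δ c) := hδskew p.2.1 c
      have h5 : B p.2.1 (δ c) = B (δ c) p.2.1 := hBsymm _ _
      have h6 : B (δ c) p.2.1 = - B c (δ p.2.1) := hδskew c p.2.1
      simp only [map_add, map_sub, map_smul, smul_eq_mul, LinearMap.add_apply,
        LinearMap.sub_apply, LinearMap.smul_apply]
      linear_combination -h1 - h2 + p.1 * h3 + q.1 * h4 - q.1 * h5 - q.1 * h6
    rw [hbr, hbr, hbr]
    simp only [LinearMap.coe_mk, AddHom.coe_mk, Prod.mk_add_mk, Prod.mk.injEq]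
    exact ⟨by ring, key2, key3⟩
  · intro p q
    rw [hT, hT]
    simp only [LinearMap.coe_mk, AddHom.coe_mk]
    have h1 : B (D p.2.1) q.2.1 = - B p.2.1 (D q.2.1) := hDskew _ _
    have h2 : B c p.2.1 = B p.2.1 c := hBsymm _ _
    have h3 : B c q.2.1 = B q.2.1 c := hBsymm _ _
    simp only [map_sub, map_smul, LinearMap.sub_apply, LinearMap.smul_apply, smul_eq_mul]
    linear_combination h1 + q.1 * h2
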